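/- Let U₁, U₂ be the indirect utility functions of two IC-IR multi-good monopoly mechanisms with transfer functions t₁ ≥ t₂ almost everywhere, both convex, nondecreasing, nonnegative functions on [0,1]^m with U_k(θ) = max over the menu of (q·θ − t). If U₁(θ) ≥ U₂(θ) at some θ ∈ [0,1]^m, then U₁(λθ) ≥ U₂(λθ) for every λ > 1 with λθ ∈ [0,1]^m; and if U₁(θ) > U₂(θ), then U₁(λθ) > U₂(λθ). -/
import Mathlib

open MeasureTheory

/-- Euclidean dot product on `Fin m → ℝ`. -/
def dot {m : ℕ} (x y : Fin m → ℝ) : ℝ := ∑ i, x i * y i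

namespace MV19
variable {m : ℕ}

lemma dot_smul_right (x : Fin m → ℝ) (c : ℝ) (y : Fin m → ℝ) :
    dot x (c • y) = c * dot x y := by
  simp only [dot, Finset.mul_sum, Pi.smul_apply, smul_eq_mul]
  exact Finset.sum_congr rfl fun i _ => by ring

lemma dot_sub_right (x u v : Fin m → ℝ) : dot x (u - v) = dot x u - dot x v := by
  simp only [dot, ← Finset.sum_sub_distrib, Pi.sub_apply]
  exact Finset.sum_congr rfl fun i _ => by ring

lemma abs_dot_le {x y : Fin m → ℝ} {b : ℝ} (hx : ∀ j, |x j| ≤ 1) (hy : ∀ j, |y j| ≤ b) :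
    |dot x y| ≤ m * b := by
  calc |dot x y| ≤ ∑ j, |x j * y j| := Finset.abs_sum_le_sum_abs _ _
    _ ≤ ∑ _j : Fin m, b := by
        refine Finset.sum_le_sum fun j _ => ?_
        rw [abs_mul]
        calc |x j| * |y j| ≤ 1 * b := by
              apply mul_le_mul (hx j) (hy j) (abs_nonneg _)
              exact zero_le_one
          _ = b := one_mul b
    _ = m * b := by simp [mul_comm]

lemma dot_nonneg' {x y : Fin m → ℝ} (hx : ∀ j, 0 ≤ x j) (hy : ∀ j, 0 ≤ y j) :
    0 ≤ dot x y :=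
  Finset.sum_nonneg fun j _ => mul_nonneg (hx j) (hy j)

lemma dot_le_m {x y : Fin m → ℝ} (hx : ∀ j, x j ≤ 1)
    (hy : ∀ j, y j ≤ 1) (hy0 : ∀ j, 0 ≤ y j) : dot x y ≤ m := by
  calc dot x y ≤ ∑ _j : Fin m, (1:ℝ) := Finset.sum_le_sum fun j _ => by
        calc x j * y j ≤ 1 * 1 := mul_le_mul (hx j) (hy j) (hy0 j) zero_le_one
          _ = 1 := one_mul 1
    _ = m := by simp

lemma dot_close {x u v : Fin m → ℝ} {ε : ℝ} (hx0 : ∀ j, 0 ≤ x j) (hx1 : ∀ j, x j ≤ 1)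
    (h : ∀ j, |u j - v j| ≤ ε) : |dot x u - dot x v| ≤ m * ε := by
  rw [← dot_sub_right]
  exact abs_dot_le (fun j => abs_le.mpr ⟨by linarith [hx0 j], hx1 j⟩) (fun j => h j)

lemma dense_good (t₁ t₂ : (Fin m → ℝ) → ℝ)
    (hT : ∀ᵐ θ ∂((volume : Measure (Fin m → ℝ)).restrict (Set.Icc (0 : Fin m → ℝ) 1)),
      t₂ θ ≤ t₁ θ) :
    ∀ x ∈ Set.Icc (0 : Fin m → ℝ) 1, ∀ ε : ℝ, 0 < ε →
      ∃ y, y ∈ Set.Icc (0 : Fin m → ℝ) 1 ∧ t₂ y ≤ t₁ y ∧ ∀ j, |y j - x j| ≤ ε := by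
  intro x hx ε hε
  obtain ⟨hx0, hx1⟩ := hx
  set a : Fin m → ℝ := fun j => max 0 (x j - ε) with ha
  set b : Fin m → ℝ := fun j => min 1 (x j + ε) with hb
  have hab : ∀ j, a j < b j := by
    intro j
    have h0 : (0:ℝ) ≤ x j := hx0 j
    have h1 : x j ≤ 1 := hx1 j
    simp only [ha, hb, lt_min_iff, max_lt_iff]
    constructor
    · constructor <;> [linarith; linarith]
    · constructor <;> [linarith; linarith]
  have hBpos : 0 < volume (Set.Icc a b) := by
    rw [Real.volume_Icc_pi]
    rw [pos_iff_ne_zero, Finset.prod_ne_zero_iff]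
    intro j _
    exact (ENNReal.ofReal_pos.mpr (sub_pos.mpr (hab j))).ne'
  have hsub : Set.Icc a b ⊆ Set.Icc (0 : Fin m → ℝ) 1 := by
    intro y ⟨hya, hyb⟩
    constructor
    · intro j; exact le_trans (le_max_left _ _) (hya j)
    · intro j; exact le_trans (hyb j) (min_le_left _ _)
  have hnull : volume ({y | ¬ t₂ y ≤ t₁ y} ∩ Set.Icc (0 : Fin m → ℝ) 1) = 0 := by
    have := hT
    rw [ae_iff] at this
    rwa [Measure.restrict_apply' measurableSet_Icc] at this
  have hkey : volume (Set.Icc a b ∩ {y | t₂ y ≤ t₁ y}) ≠ 0 := by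
    intro h0
    have : volume (Set.Icc a b) ≤ volume (Set.Icc a b ∩ {y | t₂ y ≤ t₁ y}) +
        volume ({y | ¬ t₂ y ≤ t₁ y} ∩ Set.Icc (0 : Fin m → ℝ) 1) := by
      refine le_trans (measure_mono ?_) (measure_union_le _ _)
      intro y hy
      by_cases hty : t₂ y ≤ t₁ y
      · exact Or.inl ⟨hy, hty⟩
      · exact Or.inr ⟨hty, hsub hy⟩
    rw [h0, hnull] at this
    simp at this
    exact (ne_of_gt hBpos) this
  obtain ⟨y, hy1, hy2⟩ := nonempty_of_measure_ne_zero hkey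
  refine ⟨y, hsub hy1, hy2, fun j => ?_⟩
  have h1 : a j ≤ y j := hy1.1 j
  have h2 : y j ≤ b j := hy1.2 j
  have h3 : x j - ε ≤ a j := le_max_right _ _
  have h4 : b j ≤ x j + ε := min_le_right _ _
  rw [abs_le]; constructor <;> linarith

lemma step_arith (mR s δ ε A A' B' u v u' v' l : ℝ)
    (hm : 0 ≤ mR) (hs : 1 ≤ s) (hδ : 0 < δ) (hl : s + δ ≤ l) (hε : 0 < ε)
    (f1 : u + δ*A - 2*(mR*ε) ≤ u')
    (f2 : v' ≤ v + δ*B' + 2*(mR*ε))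
    (f3 : (s+δ)*B' ≤ (s+δ)*A' - (u' - v') + 4*(mR*ε))
    (bAm : A ≤ mR) (bA'm : A' ≤ mR) (bB' : 0 ≤ B')
    (lip1 : |u' - u| ≤ mR*δ) (lip2 : |v' - v| ≤ mR*δ) :
    (s+δ)*(u - v + δ*A) - s*(s+δ)*(4*mR*(δ^2 + (1+l)*ε)) ≤ s*(u' - v' + δ*A') := by
  have hs0 : (0:ℝ) < s := lt_of_lt_of_le one_pos hs
  obtain ⟨l1a, l1b⟩ := abs_le.mp lip1
  obtain ⟨l2a, l2b⟩ := abs_le.mp lip2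
  have c1 : δ*A - δ*B' - 4*(mR*ε) ≤ (u' - v') - (u - v) := by linarith
  have c2 : s*(δ*A - δ*B' - 4*(mR*ε)) ≤ s*((u' - v') - (u - v)) :=
    mul_le_mul_of_nonneg_left c1 hs0.le
  have c3 : δ*((s+δ)*B') ≤ δ*((s+δ)*A' - (u' - v') + 4*(mR*ε)) :=
    mul_le_mul_of_nonneg_left f3 hδ.le
  have dX : δ*(-(2*(mR*δ))) ≤ δ*((u' - v') - (u - v)) := by
    apply mul_le_mul_of_nonneg_left _ hδ.le
    linarith
  have e1 : δ*δ*A ≤ δ*δ*mR := mul_le_mul_of_nonneg_left bAm (by positivity)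
  have e2 : δ*δ*A' ≤ δ*δ*mR := mul_le_mul_of_nonneg_left bA'm (by positivity)
  have e3 : 0 ≤ δ*δ*B' := by positivity
  have e4 : (1:ℝ)*(4*mR*δ^2) ≤ (s*(s+δ))*(4*mR*δ^2) := by
    apply mul_le_mul_of_nonneg_right _ (by positivity)
    nlinarith
  have e5 : (δ+s)*(4*(mR*ε)) ≤ (s*(s+δ)*(1+l))*(4*(mR*ε)) := by
    apply mul_le_mul_of_nonneg_right _ (by positivity)
    have h1l : (1:ℝ) ≤ 1 + l := by linarith
    have h1 : (1:ℝ) ≤ s*(1+l) := by nlinarith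
    have h2 : (s+δ)*1 ≤ (s+δ)*(s*(1+l)) :=
      mul_le_mul_of_nonneg_left h1 (by linarith)
    nlinarith
  linarith [c2, c3, dX, e1, e2, e3, e4, e5]

set_option maxHeartbeats 2000000 in
lemma key (q₁ q₂ : (Fin m → ℝ) → (Fin m → ℝ)) (t₁ t₂ : (Fin m → ℝ) → ℝ)
    (U1 U2 : (Fin m → ℝ) → ℝ)
    (hU1 : ∀ x, U1 x = dot (q₁ x) x - t₁ x)
    (hU2 : ∀ x, U2 x = dot (q₂ x) x - t₂ x)
    (feas₁ : ∀ θ ∈ Set.Icc (0 : Fin m → ℝ) 1,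
      q₁ θ ∈ Set.Icc (0 : Fin m → ℝ) 1 ∧ 0 ≤ t₁ θ)
    (feas₂ : ∀ θ ∈ Set.Icc (0 : Fin m → ℝ) 1,
      q₂ θ ∈ Set.Icc (0 : Fin m → ℝ) 1 ∧ 0 ≤ t₂ θ)
    (IC₁ : ∀ θ ∈ Set.Icc (0 : Fin m → ℝ) 1, ∀ θ' ∈ Set.Icc (0 : Fin m → ℝ) 1,
      dot (q₁ θ') θ - t₁ θ' ≤ dot (q₁ θ) θ - t₁ θ)
    (IC₂ : ∀ θ ∈ Set.Icc (0 : Fin m → ℝ) 1, ∀ θ' ∈ Set.Icc (0 : Fin m → ℝ) 1,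
      dot (q₂ θ') θ - t₂ θ' ≤ dot (q₂ θ) θ - t₂ θ)
    (IR₁ : ∀ θ ∈ Set.Icc (0 : Fin m → ℝ) 1, 0 ≤ dot (q₁ θ) θ - t₁ θ)
    (IR₂ : ∀ θ ∈ Set.Icc (0 : Fin m → ℝ) 1, 0 ≤ dot (q₂ θ) θ - t₂ θ)
    (hT : ∀ᵐ θ ∂((volume : Measure (Fin m → ℝ)).restrict (Set.Icc (0 : Fin m → ℝ) 1)),
      t₂ θ ≤ t₁ θ) :
    ∀ θ ∈ Set.Icc (0 : Fin m → ℝ) 1, ∀ l : ℝ, 1 < l →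
      l • θ ∈ Set.Icc (0 : Fin m → ℝ) 1 →
      l * (U1 θ - U2 θ) ≤ U1 (l • θ) - U2 (l • θ) := by
  intro θ hθ l hl hlθ
  classical
  have hm0 : (0:ℝ) ≤ (m:ℝ) := Nat.cast_nonneg m
  have hl0 : (0:ℝ) < l := by linarith
  have hθ0 : ∀ j, 0 ≤ θ j := fun j => hθ.1 j
  have hθ1 : ∀ j, θ j ≤ 1 := fun j => hθ.2 j
  have hlθ1 : ∀ j, l * θ j ≤ 1 := by
    intro j
    have := hlθ.2 j
    simpa [Pi.smul_apply, smul_eq_mul] using this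
  have memS : ∀ s : ℝ, 0 ≤ s → s ≤ l → s • θ ∈ Set.Icc (0:Fin m → ℝ) 1 := by
    intro s hs0 hsl
    refine Set.mem_Icc.mpr ⟨fun j => ?_, fun j => ?_⟩
    · simp only [Pi.smul_apply, smul_eq_mul, Pi.zero_apply]
      exact mul_nonneg hs0 (hθ0 j)
    · simp only [Pi.smul_apply, smul_eq_mul, Pi.one_apply]
      calc s * θ j ≤ l * θ j := mul_le_mul_of_nonneg_right hsl (hθ0 j)
        _ ≤ 1 := hlθ1 j
  have q1bd : ∀ x ∈ Set.Icc (0:Fin m → ℝ) 1,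
      (∀ j, 0 ≤ q₁ x j) ∧ (∀ j, q₁ x j ≤ 1) :=
    fun x hx => ⟨fun j => (feas₁ x hx).1.1 j, fun j => (feas₁ x hx).1.2 j⟩
  have q2bd : ∀ x ∈ Set.Icc (0:Fin m → ℝ) 1,
      (∀ j, 0 ≤ q₂ x j) ∧ (∀ j, q₂ x j ≤ 1) :=
    fun x hx => ⟨fun j => (feas₂ x hx).1.1 j, fun j => (feas₂ x hx).1.2 j⟩
  have sub1 : ∀ x ∈ Set.Icc (0:Fin m → ℝ) 1, ∀ y ∈ Set.Icc (0:Fin m → ℝ) 1,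
      U1 y + (dot (q₁ y) x - dot (q₁ y) y) ≤ U1 x := by
    intro x hx y hy
    have h := IC₁ x hx y hy
    rw [hU1, hU1]; linarith
  have sub2 : ∀ x ∈ Set.Icc (0:Fin m → ℝ) 1, ∀ y ∈ Set.Icc (0:Fin m → ℝ) 1,
      U2 y + (dot (q₂ y) x - dot (q₂ y) y) ≤ U2 x := by
    intro x hx y hy
    have h := IC₂ x hx y hy
    rw [hU2, hU2]; linarith
  have Ubd1 : ∀ x ∈ Set.Icc (0:Fin m → ℝ) 1, 0 ≤ U1 x ∧ U1 x ≤ m := by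
    intro x hx
    have h1 := IR₁ x hx
    have h2 : dot (q₁ x) x ≤ m := dot_le_m (q1bd x hx).2 (fun j => hx.2 j) (fun j => hx.1 j)
    have h3 := (feas₁ x hx).2
    rw [hU1]; exact ⟨h1, by linarith⟩
  have Ubd2 : ∀ x ∈ Set.Icc (0:Fin m → ℝ) 1, 0 ≤ U2 x ∧ U2 x ≤ m := by
    intro x hx
    have h1 := IR₂ x hx
    have h2 : dot (q₂ x) x ≤ m := dot_le_m (q2bd x hx).2 (fun j => hx.2 j) (fun j => hx.1 j)
    have h3 := (feas₂ x hx).2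
    rw [hU2]; exact ⟨h1, by linarith⟩
  have lip1 : ∀ x ∈ Set.Icc (0:Fin m → ℝ) 1, ∀ y ∈ Set.Icc (0:Fin m → ℝ) 1,
      ∀ e : ℝ, (∀ j, |x j - y j| ≤ e) → |U1 x - U1 y| ≤ m * e := by
    intro x hx y hy e he
    have h1 := sub1 x hx y hy
    have h2 := sub1 y hy x hx
    have d1 : |dot (q₁ y) x - dot (q₁ y) y| ≤ m*e :=
      dot_close (q1bd y hy).1 (q1bd y hy).2 he
    have d2 : |dot (q₁ x) y - dot (q₁ x) x| ≤ m*e :=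
      dot_close (q1bd x hx).1 (q1bd x hx).2 (fun j => by rw [abs_sub_comm]; exact he j)
    rw [abs_le] at d1 d2 ⊢
    constructor <;> linarith [d1.1, d1.2, d2.1, d2.2]
  have lip2 : ∀ x ∈ Set.Icc (0:Fin m → ℝ) 1, ∀ y ∈ Set.Icc (0:Fin m → ℝ) 1,
      ∀ e : ℝ, (∀ j, |x j - y j| ≤ e) → |U2 x - U2 y| ≤ m * e := by
    intro x hx y hy e he
    have h1 := sub2 x hx y hy
    have h2 := sub2 y hy x hx
    have d1 : |dot (q₂ y) x - dot (q₂ y) y| ≤ m*e :=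
      dot_close (q2bd y hy).1 (q2bd y hy).2 he
    have d2 : |dot (q₂ x) y - dot (q₂ x) x| ≤ m*e :=
      dot_close (q2bd x hx).1 (q2bd x hx).2 (fun j => by rw [abs_sub_comm]; exact he j)
    rw [abs_le] at d1 d2 ⊢
    constructor <;> linarith [d1.1, d1.2, d2.1, d2.2]
  -- quantitative bound
  have quant : ∀ c : ℝ, 0 < c → l * (U1 θ - U2 θ) - c ≤ U1 (l • θ) - U2 (l • θ) := by
    intro c hc
    obtain ⟨n, hn⟩ := exists_nat_gt (max (l-1) (2*(l-1)*((m:ℝ) + 4*m*l^3*(l-1))/c))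
    have hngt1 : (l-1 : ℝ) < n := lt_of_le_of_lt (le_max_left _ _) hn
    have hn0 : 0 < (n:ℝ) := lt_trans (by linarith) hngt1
    have hne : (n:ℝ) ≠ 0 := ne_of_gt hn0
    obtain ⟨δ, hδdef⟩ : ∃ δ : ℝ, δ = (l-1)/n := ⟨_, rfl⟩
    have hδ0 : 0 < δ := hδdef ▸ div_pos (by linarith) hn0
    have hnδ : (n:ℝ) * δ = l - 1 := by
      rw [hδdef]; field_simp
    have hδ1 : δ ≤ 1 := by
      rw [hδdef, div_le_one hn0]; linarith
    obtain ⟨D, hDdef⟩ : ∃ D : ℝ, D = 4*m*l^3*(1+l)*n := ⟨_, rfl⟩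
    have hD0 : 0 ≤ D := by
      rw [hDdef]
      have h1 : (0:ℝ) ≤ 4*m*l^3 := by positivity
      have h2 : (0:ℝ) ≤ 1+l := by linarith
      have h3 : (0:ℝ) ≤ (n:ℝ) := hn0.le
      positivity
    obtain ⟨ε, hεdef⟩ : ∃ ε : ℝ, ε = c/(2*(D+1)) := ⟨_, rfl⟩
    have hε0 : 0 < ε := by
      rw [hεdef]; exact div_pos hc (by linarith)
    have hDε : D * ε ≤ c/2 := by
      rw [hεdef, mul_div_assoc', div_le_div_iff₀ (by linarith) two_pos]
      nlinarith
    obtain ⟨E, hEdef⟩ : ∃ E : ℝ, E = 4*m*(δ^2 + (1+l)*ε) := ⟨_, rfl⟩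
    have hE0 : 0 ≤ E := by
      rw [hEdef]
      have h1 : (0:ℝ) ≤ (1+l)*ε := mul_nonneg (by linarith) hε0.le
      nlinarith [sq_nonneg δ]
    obtain ⟨K, hKdef⟩ : ∃ K : ℝ, K = l^2*E := ⟨_, rfl⟩
    have hEK : E ≤ K := by
      rw [hKdef]
      have h1 : (0:ℝ) ≤ (l^2-1)*E := mul_nonneg (by nlinarith) hE0
      nlinarith
    obtain ⟨p, hpdef⟩ : ∃ p : ℕ → (Fin m → ℝ), p = fun i : ℕ => (1+(i:ℝ)*δ) • θ := ⟨_, rfl⟩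
    have hs1 : ∀ i : ℕ, (1:ℝ) ≤ 1+(i:ℝ)*δ := by
      intro i
      have : (0:ℝ) ≤ (i:ℝ)*δ := mul_nonneg (Nat.cast_nonneg i) hδ0.le
      linarith
    have hsle : ∀ i : ℕ, i ≤ n → 1+(i:ℝ)*δ ≤ l := by
      intro i hi
      have hcast : (i:ℝ) ≤ n := Nat.cast_le.mpr hi
      nlinarith [hδ0.le]
    have hp : ∀ i : ℕ, i ≤ n → p i ∈ Set.Icc (0:Fin m→ℝ) 1 := by
      intro i hi
      have h := memS (1+(i:ℝ)*δ) (by linarith [hs1 i]) (hsle i hi)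
      simpa only [hpdef] using h
    have hex : ∀ i : ℕ, ∃ y, i ≤ n →
        (y ∈ Set.Icc (0:Fin m→ℝ) 1 ∧ t₂ y ≤ t₁ y ∧ ∀ j, |y j - p i j| ≤ ε) := by
      intro i
      by_cases hi : i ≤ n
      · obtain ⟨y, hy⟩ := dense_good t₁ t₂ hT (p i) (hp i hi) ε hε0
        exact ⟨y, fun _ => ⟨hy.1, hy.2.1, hy.2.2⟩⟩
      · exact ⟨0, fun h => absurd h hi⟩
    choose Y hY using hex
    -- closeness of dot products
    have close1 : ∀ i : ℕ, i ≤ n →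
        |dot (q₁ (Y i)) (Y i) - (1+(i:ℝ)*δ) * dot (q₁ (Y i)) θ| ≤ m*ε := by
      intro i hi
      obtain ⟨hYC, _, hYcl⟩ := hY i hi
      have h := dot_close (q1bd _ hYC).1 (q1bd _ hYC).2 hYcl
      have hd : dot (q₁ (Y i)) (p i) = (1+(i:ℝ)*δ) * dot (q₁ (Y i)) θ := by
        simp only [hpdef]; exact dot_smul_right _ _ _
      rwa [hd] at h
    have close2 : ∀ i : ℕ, i ≤ n →
        |dot (q₂ (Y i)) (Y i) - (1+(i:ℝ)*δ) * dot (q₂ (Y i)) θ| ≤ m*ε := by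
      intro i hi
      obtain ⟨hYC, _, hYcl⟩ := hY i hi
      have h := dot_close (q2bd _ hYC).1 (q2bd _ hYC).2 hYcl
      have hd : dot (q₂ (Y i)) (p i) = (1+(i:ℝ)*δ) * dot (q₂ (Y i)) θ := by
        simp only [hpdef]; exact dot_smul_right _ _ _
      rwa [hd] at h
    have lipY1 : ∀ i : ℕ, i ≤ n → |U1 (Y i) - U1 (p i)| ≤ m*ε := by
      intro i hi
      exact lip1 _ (hY i hi).1 _ (hp i hi) ε (hY i hi).2.2
    have lipY2 : ∀ i : ℕ, i ≤ n → |U2 (Y i) - U2 (p i)| ≤ m*ε := by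
      intro i hi
      exact lip2 _ (hY i hi).1 _ (hp i hi) ε (hY i hi).2.2
    have Abd : ∀ i : ℕ, i ≤ n →
        0 ≤ dot (q₁ (Y i)) θ ∧ dot (q₁ (Y i)) θ ≤ m := by
      intro i hi
      obtain ⟨hYC, _, _⟩ := hY i hi
      exact ⟨dot_nonneg' (q1bd _ hYC).1 hθ0, dot_le_m (q1bd _ hYC).2 hθ1 hθ0⟩
    have Bbd : ∀ i : ℕ, i ≤ n →
        0 ≤ dot (q₂ (Y i)) θ ∧ dot (q₂ (Y i)) θ ≤ m := by
      intro i hi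
      obtain ⟨hYC, _, _⟩ := hY i hi
      exact ⟨dot_nonneg' (q2bd _ hYC).1 hθ0, dot_le_m (q2bd _ hYC).2 hθ1 hθ0⟩
    have pclose : ∀ i : ℕ, ∀ j, |p (i+1) j - p i j| ≤ δ := by
      intro i j
      have he : p (i+1) j - p i j = δ * θ j := by
        simp only [hpdef, Pi.smul_apply, smul_eq_mul]
        push_cast
        ring
      rw [he, abs_of_nonneg (mul_nonneg hδ0.le (hθ0 j))]
      nlinarith [hθ1 j, hθ0 j, hδ0.le]
    have lipp1 : ∀ i : ℕ, i + 1 ≤ n → |U1 (p (i+1)) - U1 (p i)| ≤ m*δ := by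
      intro i hi
      exact lip1 _ (hp _ hi) _ (hp i (le_trans (Nat.le_succ i) hi)) δ (pclose i)
    have lipp2 : ∀ i : ℕ, i + 1 ≤ n → |U2 (p (i+1)) - U2 (p i)| ≤ m*δ := by
      intro i hi
      exact lip2 _ (hp _ hi) _ (hp i (le_trans (Nat.le_succ i) hi)) δ (pclose i)
    -- the per-step inequality
    have Gstep : ∀ i : ℕ, i + 1 ≤ n →
        ((1+(i:ℝ)*δ)+δ)*((U1 (p i) - U2 (p i)) + δ*(dot (q₁ (Y i)) θ))
          - (1+(i:ℝ)*δ)*((1+(i:ℝ)*δ)+δ)*(4*m*(δ^2 + (1+l)*ε))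
        ≤ (1+(i:ℝ)*δ)*((U1 (p (i+1)) - U2 (p (i+1))) + δ*(dot (q₁ (Y (i+1))) θ)) := by
      intro i hi
      have hile : i ≤ n := le_trans (Nat.le_succ i) hi
      -- f1
      have f1 : U1 (p i) + δ*(dot (q₁ (Y i)) θ) - 2*((m:ℝ)*ε) ≤ U1 (p (i+1)) := by
        have hsub := sub1 (p (i+1)) (hp _ hi) (Y i) (hY i hile).1
        have hd : dot (q₁ (Y i)) (p (i+1)) = (1+((i:ℝ)+1)*δ) * dot (q₁ (Y i)) θ := by
          simp only [hpdef]
          push_cast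
          exact dot_smul_right _ _ _
        have hc := abs_le.mp (close1 i hile)
        have hlY := abs_le.mp (lipY1 i hile)
        rw [hd] at hsub
        linarith [hsub, hc.1, hc.2, hlY.1, hlY.2]
      -- f2
      have f2 : U2 (p (i+1)) ≤ U2 (p i) + δ*(dot (q₂ (Y (i+1))) θ) + 2*((m:ℝ)*ε) := by
        have hsub := sub2 (p i) (hp i hile) (Y (i+1)) (hY (i+1) hi).1
        have hd : dot (q₂ (Y (i+1))) (p i) = (1+(i:ℝ)*δ) * dot (q₂ (Y (i+1))) θ := by
          simp only [hpdef]
          exact dot_smul_right _ _ _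
        have hc := abs_le.mp (close2 (i+1) hi)
        push_cast at hc
        have hlY := abs_le.mp (lipY2 (i+1) hi)
        rw [hd] at hsub
        linarith [hsub, hc.1, hc.2, hlY.1, hlY.2]
      -- f3
      have f3 : ((1+(i:ℝ)*δ)+δ)*(dot (q₂ (Y (i+1))) θ) ≤
          ((1+(i:ℝ)*δ)+δ)*(dot (q₁ (Y (i+1))) θ)
          - (U1 (p (i+1)) - U2 (p (i+1))) + 4*((m:ℝ)*ε) := by
        have ht := (hY (i+1) hi).2.1
        have ht1 : t₁ (Y (i+1)) = dot (q₁ (Y (i+1))) (Y (i+1)) - U1 (Y (i+1)) := by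
          rw [hU1]; ring
        have ht2 : t₂ (Y (i+1)) = dot (q₂ (Y (i+1))) (Y (i+1)) - U2 (Y (i+1)) := by
          rw [hU2]; ring
        rw [ht1, ht2] at ht
        have hc1 := abs_le.mp (close1 (i+1) hi)
        have hc2 := abs_le.mp (close2 (i+1) hi)
        push_cast at hc1 hc2
        have hlY1 := abs_le.mp (lipY1 (i+1) hi)
        have hlY2 := abs_le.mp (lipY2 (i+1) hi)
        linarith [ht, hc1.1, hc1.2, hc2.1, hc2.2, hlY1.1, hlY1.2, hlY2.1, hlY2.2]
      have hslestep : (1+(i:ℝ)*δ) + δ ≤ l := by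
        have := hsle (i+1) hi
        push_cast at this
        linarith
      exact step_arith (m:ℝ) (1+(i:ℝ)*δ) δ ε
        (dot (q₁ (Y i)) θ) (dot (q₁ (Y (i+1))) θ) (dot (q₂ (Y (i+1))) θ)
        (U1 (p i)) (U2 (p i)) (U1 (p (i+1))) (U2 (p (i+1))) l
        hm0 (hs1 i) hδ0 hslestep hε0 f1 f2 f3
        (Abd i hile).2 (Abd (i+1) hi).2 (Bbd (i+1) hi).1
        (abs_le.mpr (abs_le.mp (lipp1 i hi))) (abs_le.mpr (abs_le.mp (lipp2 i hi)))
    -- induction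
    have ind : ∀ i : ℕ, i ≤ n →
        (1+(i:ℝ)*δ) * ((U1 (p 0) - U2 (p 0) + δ * dot (q₁ (Y 0)) θ) - (i:ℝ)*K) ≤
        (U1 (p i) - U2 (p i)) + δ * dot (q₁ (Y i)) θ := by
      intro i
      induction i with
      | zero =>
        intro _
        norm_num
      | succ i ih =>
        intro hi1
        have hile : i ≤ n := le_trans (Nat.le_succ i) hi1
        have IH := ih hile
        have G := Gstep i hi1
        have hKE : K = l^2*E := hKdef
        have hEE : E = 4*m*(δ^2 + (1+l)*ε) := hEdef
        have hs0 : (0:ℝ) < 1+(i:ℝ)*δ := by linarith [hs1 i]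
        have hs'0 : (0:ℝ) ≤ (1+(i:ℝ)*δ)+δ := by linarith [hs1 i, hδ0.le]
        have mIH := mul_le_mul_of_nonneg_left IH hs'0
        have step2 : (1+(i:ℝ)*δ) * (((1+(i:ℝ)*δ)+δ) *
            ((U1 (p 0) - U2 (p 0) + δ * dot (q₁ (Y 0)) θ) - (i:ℝ)*K - E)) ≤
            (1+(i:ℝ)*δ) * ((U1 (p (i+1)) - U2 (p (i+1))) + δ * dot (q₁ (Y (i+1))) θ) := by
          rw [hEE]
          linarith [mIH, G]
        have step3 := le_of_mul_le_mul_left step2 hs0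
        have hmono : ((U1 (p 0) - U2 (p 0) + δ * dot (q₁ (Y 0)) θ) - ((i:ℝ)+1)*K) ≤
            ((U1 (p 0) - U2 (p 0) + δ * dot (q₁ (Y 0)) θ) - (i:ℝ)*K - E) := by
          linarith [hEK]
        have hmul := mul_le_mul_of_nonneg_left hmono hs'0
        push_cast
        calc (1+((i:ℝ)+1)*δ) * ((U1 (p 0) - U2 (p 0) + δ * dot (q₁ (Y 0)) θ) - ((i:ℝ)+1)*K)
            = ((1+(i:ℝ)*δ)+δ) * ((U1 (p 0) - U2 (p 0) + δ * dot (q₁ (Y 0)) θ) - ((i:ℝ)+1)*K) := by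
              ring
          _ ≤ ((1+(i:ℝ)*δ)+δ) * ((U1 (p 0) - U2 (p 0) + δ * dot (q₁ (Y 0)) θ) - (i:ℝ)*K - E) := hmul
          _ ≤ (U1 (p (i+1)) - U2 (p (i+1))) + δ * dot (q₁ (Y (i+1))) θ := step3
    -- assemble
    have hp0 : p 0 = θ := by
      simp only [hpdef]
      norm_num
    have hpn : p n = l • θ := by
      have h1 : 1+(n:ℝ)*δ = l := by linarith [hnδ]
      simp only [hpdef]
      rw [h1]
    have hIndn := ind n (le_refl n)
    have hln : 1+(n:ℝ)*δ = l := by linarith [hnδ]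
    rw [hp0, hpn, hln] at hIndn
    have hA0 : 0 ≤ dot (q₁ (Y 0)) θ := (Abd 0 (Nat.zero_le n)).1
    have hAn : dot (q₁ (Y n)) θ ≤ m := (Abd n (le_refl n)).2
    have hδAn : δ * dot (q₁ (Y n)) θ ≤ δ * m :=
      mul_le_mul_of_nonneg_left hAn hδ0.le
    have hlδA0 : 0 ≤ l * (δ * dot (q₁ (Y 0)) θ) :=
      mul_nonneg hl0.le (mul_nonneg hδ0.le hA0)
    have hδW : δ * ((m:ℝ) + 4*m*l^3*(l-1)) ≤ c/2 := by
      have hW1 : (0:ℝ) ≤ 4*(m:ℝ)*l^3 := by positivity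
      have hW0 : (0:ℝ) ≤ 4*(m:ℝ)*l^3*(l-1) := mul_nonneg hW1 (by linarith)
      have h2 := lt_of_le_of_lt (le_max_right _ _) hn
      rw [div_lt_iff₀ hc] at h2
      rw [hδdef, div_mul_eq_mul_div, div_le_iff₀ hn0]
      nlinarith
    have hlnK : l*((n:ℝ)*K) = δ*(4*(m:ℝ)*l^3*(l-1)) + D*ε := by
      rw [hKdef, hEdef, hDdef]
      have hd2 : (n:ℝ)*δ^2 = (l-1)*δ := by
        rw [pow_two, ← mul_assoc, hnδ]
      linear_combination (4*(m:ℝ)*l^3) * hd2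
    have hexpand : l*((U1 θ - U2 θ + δ * dot (q₁ (Y 0)) θ) - (n:ℝ)*K) =
        l*(U1 θ - U2 θ) + l*(δ * dot (q₁ (Y 0)) θ) - l*((n:ℝ)*K) := by ring
    linarith [hIndn, hexpand, hlnK, hDε, hδW, hδAn, hlδA0]
  -- conclude from quant
  have := quant
  by_contra hcon
  push_neg at hcon
  have hd : 0 < (l * (U1 θ - U2 θ) - (U1 (l • θ) - U2 (l • θ)))/2 := by linarith
  have := quant _ hd
  linarith

end MV19

/-- Manelli–Vincent single-crossing along rays: for IC-IR multi-good monopoly mechanisms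
`(q₁,t₁)` and `(q₂,t₂)` with `t₁ ≥ t₂` a.e., if the indirect utility of the first weakly
(resp. strictly) exceeds that of the second at `θ`, the same holds at `λθ` for `λ > 1`
with `λθ` in the cube. -/
theorem stmt19 {m : ℕ}
    (q₁ q₂ : (Fin m → ℝ) → (Fin m → ℝ)) (t₁ t₂ : (Fin m → ℝ) → ℝ)
    (feas₁ : ∀ θ ∈ Set.Icc (0 : Fin m → ℝ) 1,
      q₁ θ ∈ Set.Icc (0 : Fin m → ℝ) 1 ∧ 0 ≤ t₁ θ)
    (feas₂ : ∀ θ ∈ Set.Icc (0 : Fin m → ℝ) 1,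
      q₂ θ ∈ Set.Icc (0 : Fin m → ℝ) 1 ∧ 0 ≤ t₂ θ)
    (IC₁ : ∀ θ ∈ Set.Icc (0 : Fin m → ℝ) 1, ∀ θ' ∈ Set.Icc (0 : Fin m → ℝ) 1,
      dot (q₁ θ') θ - t₁ θ' ≤ dot (q₁ θ) θ - t₁ θ)
    (IC₂ : ∀ θ ∈ Set.Icc (0 : Fin m → ℝ) 1, ∀ θ' ∈ Set.Icc (0 : Fin m → ℝ) 1,
      dot (q₂ θ') θ - t₂ θ' ≤ dot (q₂ θ) θ - t₂ θ)
    (IR₁ : ∀ θ ∈ Set.Icc (0 : Fin m → ℝ) 1, 0 ≤ dot (q₁ θ) θ - t₁ θ)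
    (IR₂ : ∀ θ ∈ Set.Icc (0 : Fin m → ℝ) 1, 0 ≤ dot (q₂ θ) θ - t₂ θ)
    (hT : ∀ᵐ θ ∂((volume : Measure (Fin m → ℝ)).restrict (Set.Icc (0 : Fin m → ℝ) 1)),
      t₂ θ ≤ t₁ θ) :
    ∀ θ ∈ Set.Icc (0 : Fin m → ℝ) 1, ∀ l : ℝ, 1 < l →
      l • θ ∈ Set.Icc (0 : Fin m → ℝ) 1 →
      ((dot (q₂ θ) θ - t₂ θ ≤ dot (q₁ θ) θ - t₁ θ →
          dot (q₂ (l • θ)) (l • θ) - t₂ (l • θ) ≤ dot (q₁ (l • θ)) (l • θ) - t₁ (l • θ)) ∧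
       (dot (q₂ θ) θ - t₂ θ < dot (q₁ θ) θ - t₁ θ →
          dot (q₂ (l • θ)) (l • θ) - t₂ (l • θ) < dot (q₁ (l • θ)) (l • θ) - t₁ (l • θ))) := by
  intro θ hθ l hl hlθ
  have hkey : l * ((dot (q₁ θ) θ - t₁ θ) - (dot (q₂ θ) θ - t₂ θ)) ≤
      (dot (q₁ (l • θ)) (l • θ) - t₁ (l • θ)) - (dot (q₂ (l • θ)) (l • θ) - t₂ (l • θ)) :=
    MV19.key q₁ q₂ t₁ t₂ (fun x => dot (q₁ x) x - t₁ x) (fun x => dot (q₂ x) x - t₂ x)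
      (fun _ => rfl) (fun _ => rfl) feas₁ feas₂ IC₁ IC₂ IR₁ IR₂ hT θ hθ l hl hlθ
  constructor
  · intro h
    nlinarith [hkey]
  · intro h
    nlinarith [hkey]
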